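/- Under the MC cost the local objective is exactly aligned with the global objective: for every player i and every unilateral deviation from profile a to profile a' (differing only in i's action), if the deviation strictly decreases player i's MC cost then it strictly decreases the network power, i.e. C_i^MC(a') < C_i^MC(a) implies P^net(a') < P^net(a). -/

import Mathlib

open Finset

variable {Q : Type*} [Fintype Q] [DecidableEq Q]

/-- The set of children of node `j` under action profile `a`
(the players are the nodes different from the source `S`). -/
def children (S : Q) (a : {i : Q // i ≠ S} → Q) (j : Q) :
    Finset {i : Q // i ≠ S} :=
  Finset.univ.filter (fun i => a i = j)

/-- Total power required at node `j` to serve the set `M` of children: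
circuitry power plus the largest unicast power, and `0` if `M` is empty. -/
noncomputable def nodePower (S : Q) (pc : Q → ℝ) (p : Q → Q → ℝ) (j : Q)
    (M : Finset {i : Q // i ≠ S}) : ℝ :=
  if h : M.Nonempty then pc j + M.sup' h (fun i => p i.1 j) else 0

/-- Network power: the sum of the node powers over all nodes. -/
noncomputable def netPower (S : Q) (pc : Q → ℝ) (p : Q → Q → ℝ)
    (a : {i : Q // i ≠ S} → Q) : ℝ :=
  ∑ j, nodePower S pc p j (children S a j)

/-- Marginal-contribution (MC) cost of player `i` at profile `a`. -/
noncomputable def mcCost (S : Q) (pc : Q → ℝ) (p : Q → Q → ℝ)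
    (a : {i : Q // i ≠ S} → Q) (i : {i : Q // i ≠ S}) : ℝ :=
  nodePower S pc p (a i) (children S a (a i)) -
    nodePower S pc p (a i) ((children S a (a i)).erase i)

/-- Under the MC cost the local objective is exactly aligned with the global
objective: a unilateral deviation that strictly decreases player `i`'s MC cost
strictly decreases the network power. -/
theorem mc_aligned (S : Q) (pc : Q → ℝ) (p : Q → Q → ℝ)
    (hpc : ∀ j, 0 ≤ pc j) (hp : ∀ i j, 0 ≤ p i j)
    (a a' : {i : Q // i ≠ S} → Q)
    (ha : ∀ m, a m ≠ m.1) (ha' : ∀ m, a' m ≠ m.1)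
    (i : {i : Q // i ≠ S}) (hdiff : ∀ m, m ≠ i → a m = a' m)
    (hlt : mcCost S pc p a' i < mcCost S pc p a i) :
    netPower S pc p a' < netPower S pc p a := by
  by_cases heq : a i = a' i
  · exfalso
    have : a = a' := by
      funext m
      by_cases hm : m = i
      · subst hm; exact heq
      · exact hdiff m hm
    rw [this] at hlt; exact lt_irrefl _ hlt
  · have h1 : children S a' (a i) = (children S a (a i)).erase i := by
      ext m
      simp only [children, Finset.mem_erase, Finset.mem_filter, Finset.mem_univ, true_and]
      constructor
      · intro hm
        rcases eq_or_ne m i with rfl | hne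
        · exact absurd hm.symm heq
        · exact ⟨hne, (hdiff m hne).trans hm⟩
      · rintro ⟨hne, hm⟩
        exact (hdiff m hne).symm.trans hm
    have h2 : children S a (a' i) = (children S a' (a' i)).erase i := by
      ext m
      simp only [children, Finset.mem_erase, Finset.mem_filter, Finset.mem_univ, true_and]
      constructor
      · intro hm
        rcases eq_or_ne m i with rfl | hne
        · exact absurd hm heq
        · exact ⟨hne, (hdiff m hne).symm.trans hm⟩
      · rintro ⟨hne, hm⟩
        exact (hdiff m hne).trans hm
    have h3 : ∀ j, j ≠ a i → j ≠ a' i → children S a j = children S a' j := by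
      intro j hj1 hj2
      ext m
      simp only [children, Finset.mem_filter, Finset.mem_univ, true_and]
      rcases eq_or_ne m i with rfl | hne
      · constructor
        · intro hm; exact absurd hm.symm hj1
        · intro hm; exact absurd hm.symm hj2
      · rw [hdiff m hne]
    have key : netPower S pc p a - netPower S pc p a'
        = mcCost S pc p a i - mcCost S pc p a' i := by
      have hsum : netPower S pc p a - netPower S pc p a'
          = ∑ j, (nodePower S pc p j (children S a j)
              - nodePower S pc p j (children S a' j)) := by
        rw [netPower, netPower, ← Finset.sum_sub_distrib]
      rw [hsum, Finset.sum_eq_add_of_mem (a i) (a' i) (Finset.mem_univ _)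
        (Finset.mem_univ _) heq ?_]
      · rw [mcCost, mcCost, h1, h2]
        ring
      · intro j _ hj
        rw [h3 j hj.1 hj.2, sub_self]
    linarith [key]
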